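/- arXiv:2010.09097 — 2 statements merged into one kernel-verified Lean document; each statement's English description precedes it below -/
import Mathlib

section
/- Let G be a finite group, H ≤ G, and X₁,…,Xₙ be H-sets. There is a G-equivariant bijection between Coind_H^G(X₁ ⊔ … ⊔ Xₙ) (the set of H-equivariant maps G → X₁ ⊔ … ⊔ Xₙ) and the disjoint union over G-orbit representatives [λ] ∈ Hom(G/H, [n])/G of the induced G-sets Ind_{G_λ}^G F_λ(X₁,…,Xₙ), where F_λ(X₁,…,Xₙ) is the G_λ-subset of Coind_H^G(X₁ ⊔ … ⊔ Xₙ) consisting of those maps whose composition with the 'component' map to [n] equals λ. -/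
variable {G : Type} [Group G]

/-- The action of `G` on functions `G ⧸ H → Fin n` by `(g • l) x = l (g⁻¹ • x)`. -/
instance arrowMulAction (H : Subgroup G) (n : ℕ) : MulAction G ((G ⧸ H) → Fin n) where
  smul g l := fun x => l (g⁻¹ • x)
  one_smul l := by funext x; show l ((1:G)⁻¹ • x) = l x; simp
  mul_smul a b l := by
    funext x
    show l ((a * b)⁻¹ • x) = l (b⁻¹ • a⁻¹ • x)
    rw [mul_inv_rev, mul_smul]

/-- The stabilizer `G_λ` of `λ : G ⧸ H → Fin n`. -/
def stab (H : Subgroup G) {n : ℕ} (l : G ⧸ H → Fin n) : Subgroup G where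
  carrier := {g | ∀ x, l (g⁻¹ • x) = l x}
  one_mem' := by intro x; simp
  mul_mem' := by
    intro a b ha hb x
    simp only [Set.mem_setOf_eq] at *
    rw [mul_inv_rev, mul_smul, hb, ha]
  inv_mem' := by
    intro a ha x
    simp only [Set.mem_setOf_eq] at *
    have h := ha (a • x)
    rw [inv_smul_smul] at h
    rw [inv_inv]
    exact h.symm

/-- Coinduction: `H`-equivariant maps `G → X`, a `G`-set. -/
def Coind (H : Subgroup G) (X : Type) [MulAction H X] : Type :=
  {f : G → X // ∀ (g : G) (h : H), f (g * h) = h⁻¹ • f g}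

instance Coind.mulAction (H : Subgroup G) (X : Type) [MulAction H X] :
    MulAction G (Coind H X) where
  smul g f := ⟨fun g' => f.1 (g⁻¹ * g'), by
    intro g' h
    show f.1 (g⁻¹ * (g' * h)) = h⁻¹ • f.1 (g⁻¹ * g')
    rw [← mul_assoc]
    exact f.2 (g⁻¹ * g') h⟩
  one_smul f := Subtype.ext (funext fun g' => by show f.1 ((1:G)⁻¹ * g') = f.1 g'; simp)
  mul_smul a b f := Subtype.ext (funext fun g' => by
    show f.1 ((a * b)⁻¹ * g') = f.1 (b⁻¹ * (a⁻¹ * g'))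
    rw [mul_inv_rev, mul_assoc])

instance sigmaMulAction (H : Subgroup G) {n : ℕ} (X : Fin n → Type)
    [∀ i, MulAction H (X i)] : MulAction H (Σ i, X i) where
  smul h p := ⟨p.1, h • p.2⟩
  one_smul p := by cases p with | mk i x => show (⟨i, (1:H) • x⟩ : Σ i, X i) = ⟨i, x⟩; rw [one_smul]
  mul_smul a b p := by
    cases p with | mk i x =>
      show (⟨i, (a * b) • x⟩ : Σ i, X i) = ⟨i, a • b • x⟩
      rw [mul_smul]

/-- The map recording in which summand an element of `Coind_H^G (X₁ ⊔ ⋯ ⊔ Xₙ)` takes its values. -/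
def component (H : Subgroup G) {n : ℕ} (X : Fin n → Type) [∀ i, MulAction H (X i)]
    (f : Coind H (Σ i, X i)) : G ⧸ H → Fin n :=
  Quotient.lift (fun g => (f.1 g).1) (by
    intro a b hab
    have hmem : a⁻¹ * b ∈ H := QuotientGroup.leftRel_apply.mp hab
    show (f.1 a).1 = (f.1 b).1
    have hb : f.1 b = f.1 (a * ((⟨a⁻¹ * b, hmem⟩ : H) : G)) := by
      simp [mul_inv_cancel_left]
    rw [hb, f.2 a ⟨a⁻¹ * b, hmem⟩]
    rfl)

/-- `F_λ`: the fiber of the component map over `λ`. -/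
def Flambda (H : Subgroup G) {n : ℕ} (X : Fin n → Type) [∀ i, MulAction H (X i)]
    (l : G ⧸ H → Fin n) : Type :=
  {f : Coind H (Σ i, X i) // component H X f = l}

theorem component_smul (H : Subgroup G) {n : ℕ} (X : Fin n → Type) [∀ i, MulAction H (X i)]
    (g : G) (f : Coind H (Σ i, X i)) :
    component H X (g • f) = g • component H X f := by
  funext x
  induction x using QuotientGroup.induction_on with
  | H g' => rfl

/-- `F_λ` is a `G_λ`-set. -/
instance Flambda.mulAction (H : Subgroup G) {n : ℕ} (X : Fin n → Type)
    [∀ i, MulAction H (X i)] (l : G ⧸ H → Fin n) :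
    MulAction (stab H l) (Flambda H X l) where
  smul k f := ⟨(k : G) • f.1, by
    rw [component_smul, f.2]
    funext x
    exact k.2 x⟩
  one_smul f := Subtype.ext (by
    show ((1 : stab H l) : G) • f.1 = f.1
    rw [Subgroup.coe_one, one_smul])
  mul_smul a b f := Subtype.ext (by
    show ((a * b : stab H l) : G) • f.1 = (a : G) • (b : G) • f.1
    rw [Subgroup.coe_mul, mul_smul])

/-- The induced `G`-set `Ind_K^G Y = G ×_K Y`. -/
def indSetoid (K : Subgroup G) (Y : Type) [MulAction K Y] : Setoid (G × Y) where
  r p q := ∃ k : K, q.1 = p.1 * k ∧ q.2 = k⁻¹ • p.2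
  iseqv := by
    constructor
    · intro p; exact ⟨1, by simp, by simp⟩
    · rintro p q ⟨k, h1, h2⟩
      refine ⟨k⁻¹, ?_, ?_⟩
      · rw [h1]; simp [mul_assoc]
      · rw [h2]; simp
    · rintro p q r ⟨k, h1, h2⟩ ⟨k', h1', h2'⟩
      refine ⟨k * k', ?_, ?_⟩
      · rw [h1', h1]; push_cast; rw [mul_assoc]
      · rw [h2', h2, ← mul_smul, ← mul_inv_rev]

def Ind (K : Subgroup G) (Y : Type) [MulAction K Y] : Type :=
  Quotient (indSetoid K Y)

instance Ind.mulAction (K : Subgroup G) (Y : Type) [MulAction K Y] :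
    MulAction G (Ind K Y) where
  smul g := Quotient.map (fun p => (g * p.1, p.2)) (by
    rintro p q ⟨k, h1, h2⟩
    refine ⟨k, ?_, h2⟩
    show g * q.1 = g * p.1 * k
    rw [h1, mul_assoc])
  one_smul p := by
    induction p using Quotient.inductionOn with
    | h p => exact Quotient.sound ⟨1, by simp, by simp⟩
  mul_smul a b p := by
    induction p using Quotient.inductionOn with
    | h p => exact Quotient.sound ⟨1, by simp [mul_assoc], by simp⟩

section Aux

variable {n : ℕ}

theorem rep_exists (H : Subgroup G) (l : (G ⧸ H) → Fin n) :
    ∃ g : G,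
      g • (Quotient.out (Quotient.mk (MulAction.orbitRel G ((G ⧸ H) → Fin n)) l)) = l := by
  obtain ⟨g, hg⟩ :=
    Quotient.exact (Quotient.out_eq (Quotient.mk (MulAction.orbitRel G ((G ⧸ H) → Fin n)) l))
  exact ⟨g⁻¹, by rw [← hg, inv_smul_smul]⟩

/-- A choice of `g` carrying the orbit representative of `l` to `l`. -/
noncomputable def rep (H : Subgroup G) (l : (G ⧸ H) → Fin n) : G :=
  (rep_exists H l).choose

theorem rep_spec (H : Subgroup G) (l : (G ⧸ H) → Fin n) :
    rep H l • (Quotient.out (Quotient.mk (MulAction.orbitRel G ((G ⧸ H) → Fin n)) l)) = l :=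
  (rep_exists H l).choose_spec

variable (H : Subgroup G) (X : Fin n → Type) [∀ i, MulAction H (X i)]

/-- The forward map of the decomposition. -/
noncomputable def dec (f : Coind H (Σ i, X i)) :
    Σ o : Quotient (MulAction.orbitRel G ((G ⧸ H) → Fin n)),
      Ind (stab H (Quotient.out o)) (Flambda H X (Quotient.out o)) :=
  ⟨Quotient.mk (MulAction.orbitRel G ((G ⧸ H) → Fin n)) (component H X f),
    Quotient.mk (indSetoid _ _)
      (rep H (component H X f),
        ⟨(rep H (component H X f))⁻¹ • f, by
          rw [component_smul]
          have h := rep_spec H (component H X f)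
          rw [inv_smul_eq_iff]
          exact h.symm⟩)⟩

/-- The inverse map of the decomposition. -/
noncomputable def decInv (p : Σ o : Quotient (MulAction.orbitRel G ((G ⧸ H) → Fin n)),
      Ind (stab H (Quotient.out o)) (Flambda H X (Quotient.out o))) :
    Coind H (Σ i, X i) :=
  Quotient.liftOn p.2 (fun q => q.1 • q.2.1) (by
    rintro q q' ⟨k, h1, h2⟩
    show q.1 • q.2.1 = q'.1 • q'.2.1
    have h2' : q'.2.1 = ((k : G))⁻¹ • q.2.1 := by
      rw [h2]; rfl
    rw [h1, h2', smul_smul, mul_assoc, mul_inv_cancel, mul_one])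

theorem decInv_mk (o : Quotient (MulAction.orbitRel G ((G ⧸ H) → Fin n)))
    (q : G × Flambda H X (Quotient.out o)) :
    decInv H X ⟨o, Quotient.mk (indSetoid _ _) q⟩ = q.1 • q.2.1 := rfl

theorem decInv_injective : Function.Injective (decInv H X) := by
  rintro ⟨o, y⟩ ⟨o', y'⟩ h
  induction y using Quotient.inductionOn with
  | h q =>
  induction y' using Quotient.inductionOn with
  | h q' =>
  obtain ⟨g, f₀⟩ := q
  obtain ⟨g', f₀'⟩ := q'
  rw [decInv_mk, decInv_mk] at h
  -- h : g • f₀.1 = g' • f₀'.1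
  have ho : o = o' := by
    have h1 : Quotient.mk (MulAction.orbitRel G ((G ⧸ H) → Fin n))
        (component H X (g • f₀.1)) = o := by
      rw [component_smul, f₀.2]
      exact (Quotient.sound (MulAction.mem_orbit (Quotient.out o) g)).trans (Quotient.out_eq o)
    have h2 : Quotient.mk (MulAction.orbitRel G ((G ⧸ H) → Fin n))
        (component H X (g' • f₀'.1)) = o' := by
      rw [component_smul, f₀'.2]
      exact (Quotient.sound (MulAction.mem_orbit (Quotient.out o') g')).trans (Quotient.out_eq o')
    rw [← h1, ← h2, h]
  subst ho
  refine congrArg (Sigma.mk o) (Quotient.sound ?_)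
  have hcomp : (g'⁻¹ * g) • (Quotient.out o) = Quotient.out o := by
    have hc : component H X ((g'⁻¹ * g) • f₀.1) = (g'⁻¹ * g) • (Quotient.out o) := by
      rw [component_smul, f₀.2]
    have hval : (g'⁻¹ * g) • f₀.1 = f₀'.1 := by
      rw [mul_smul, h, inv_smul_smul]
    rw [← hc, hval, f₀'.2]
  have hk : (g⁻¹ * g') ∈ stab H (Quotient.out o) := by
    intro x
    have key : (g⁻¹ * g') • ((g'⁻¹ * g) • (Quotient.out o)) = Quotient.out o := by
      rw [smul_smul, mul_assoc, mul_inv_cancel_left, inv_mul_cancel, one_smul]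
    rw [hcomp] at key
    exact congrFun key x
  refine ⟨⟨g⁻¹ * g', hk⟩, ?_, ?_⟩
  · show g' = g * (g⁻¹ * g')
    rw [mul_inv_cancel_left]
  · apply Subtype.ext
    show f₀'.1 = ((⟨g⁻¹ * g', hk⟩⁻¹ : stab H (Quotient.out o)) : G) • f₀.1
    show f₀'.1 = (g⁻¹ * g')⁻¹ • f₀.1
    rw [mul_inv_rev, inv_inv, mul_smul, h, inv_smul_smul]

end Aux

/-- Decomposition of coinduction: `Coind_H^G (X₁ ⊔ ⋯ ⊔ Xₙ)` is `G`-equivariantly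
in bijection with the disjoint union over orbit representatives `[λ]` of the induced
`G`-sets `Ind_{G_λ}^G F_λ(X₁, …, Xₙ)`. -/
theorem stmt_3 [Finite G] (H : Subgroup G) (n : ℕ) (X : Fin n → Type)
    [∀ i, MulAction H (X i)] :
    ∃ e : Coind H (Σ i, X i) ≃
        (Σ o : Quotient (MulAction.orbitRel G ((G ⧸ H) → Fin n)),
          Ind (stab H (Quotient.out o)) (Flambda H X (Quotient.out o))),
      ∀ (g : G) (f : Coind H (Σ i, X i)),
        e (g • f) = ⟨(e f).1, g • (e f).2⟩ := by
  classical
  have left_inv : ∀ f : Coind H (Σ i, X i), decInv H X (dec H X f) = f := by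
    intro f
    show rep H (component H X f) • ((rep H (component H X f))⁻¹ • f) = f
    rw [smul_inv_smul]
  have right_inv : ∀ p, dec H X (decInv H X p) = p := by
    intro p
    apply decInv_injective H X
    exact left_inv (decInv H X p)
  refine ⟨⟨dec H X, decInv H X, left_inv, right_inv⟩, ?_⟩
  intro g f
  show dec H X (g • f) = ⟨(dec H X f).1, g • (dec H X f).2⟩
  rcases hdf : dec H X f with ⟨o, y⟩
  induction y using Quotient.inductionOn with
  | h q =>
    obtain ⟨g₀, f₀⟩ := q
    have hf : f = g₀ • f₀.1 := by
      rw [← left_inv f, hdf, decInv_mk]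
    show dec H X (g • f) = ⟨o, (Quotient.mk (indSetoid (stab H (Quotient.out o))
        (Flambda H X (Quotient.out o))) (g * g₀, f₀) :
        Ind (stab H (Quotient.out o)) (Flambda H X (Quotient.out o)))⟩
    have hgf : g • f = decInv H X ⟨o, Quotient.mk (indSetoid (stab H (Quotient.out o))
        (Flambda H X (Quotient.out o))) (g * g₀, f₀)⟩ := by
      rw [decInv_mk, hf, smul_smul]
    rw [hgf, right_inv]
end

section
/- Let G be a finite group, H, K ≤ G subgroups, and X an H-set. Choose a set of representatives g₁,…,g_r for the double cosets K\G/H. Then there is a K-equivariant bijection Res_K^G Coind_H^G(X) ≅ ∏_{i=1}^r Coind_{H_{g_i}}^K Res_{H_{g_i}}^H X, where H_g = K ∩ gHg⁻¹ and H_g acts on X via h·x = (g⁻¹hg)·x (Mackey double coset formula for coinduction of G-sets). -/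
variable {G : Type} [Group G]

/-- The conjugate subgroup `g H g⁻¹`. -/
def conjSub (H : Subgroup G) (g : G) : Subgroup G where
  carrier := {x | g⁻¹ * x * g ∈ H}
  one_mem' := by simpa using H.one_mem
  mul_mem' := by
    intro a b ha hb
    simp only [Set.mem_setOf_eq] at *
    convert mul_mem ha hb using 1
    group
  inv_mem' := by
    intro a ha
    simp only [Set.mem_setOf_eq] at *
    convert inv_mem ha using 1
    group

/-- The action of `H_g = K ∩ gHg⁻¹` (as a subgroup of `K`) on an `H`-set `X`
via `h • x = (g⁻¹ h g) • x`. -/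
def dcAction (H K : Subgroup G) (g : G) (X : Type) [MulAction H X] :
    MulAction ((K ⊓ conjSub H g).subgroupOf K) X where
  smul k x :=
    (⟨g⁻¹ * ((k : K) : G) * g, (Subgroup.mem_inf.mp (Subgroup.mem_subgroupOf.mp k.2)).2⟩ : H) • x
  one_smul x := by
    show (⟨g⁻¹ * _ * g, _⟩ : H) • x = x
    have h1 : (⟨g⁻¹ * (((1 : (K ⊓ conjSub H g).subgroupOf K) : K) : G) * g,
        (Subgroup.mem_inf.mp (Subgroup.mem_subgroupOf.mp
          (1 : (K ⊓ conjSub H g).subgroupOf K).2)).2⟩ : H) = 1 := by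
      ext
      simp
    rw [h1, one_smul]
  mul_smul a b x := by
    show (⟨g⁻¹ * _ * g, _⟩ : H) • x = (⟨g⁻¹ * _ * g, _⟩ : H) • ((⟨g⁻¹ * _ * g, _⟩ : H) • x)
    rw [← mul_smul]
    congr 1
    ext
    show g⁻¹ * (((a * b : (K ⊓ conjSub H g).subgroupOf K) : K) : G) * g
      = (g⁻¹ * ((a : K) : G) * g) * (g⁻¹ * ((b : K) : G) * g)
    push_cast
    group



theorem mem_conjSub {H : Subgroup G} {g₀ x : G} : x ∈ conjSub H g₀ ↔ g₀⁻¹ * x * g₀ ∈ H :=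
  Iff.rfl

theorem dc_mem_H {H K : Subgroup G} {g₀ : G} (h : ((K ⊓ conjSub H g₀).subgroupOf K)) :
    g₀⁻¹ * ((h : K) : G) * g₀ ∈ H :=
  (Subgroup.mem_inf.mp (Subgroup.mem_subgroupOf.mp h.2)).2

theorem dcAction_smul {H K : Subgroup G} {g₀ : G} {X : Type} [MulAction H X]
    (k : (K ⊓ conjSub H g₀).subgroupOf K) (x : X) :
    (letI := dcAction H K g₀ X; k • x) = (⟨g₀⁻¹ * ((k : K) : G) * g₀, dc_mem_H k⟩ : H) • x :=
  rfl

/-- The forward map of the Mackey bijection. -/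
def mackeyFwd (H K : Subgroup G) (X : Type) [MulAction H X] {r : ℕ} (g : Fin r → G)
    (f : Coind H X) (i : Fin r) :
    @Coind K _ ((K ⊓ conjSub H (g i)).subgroupOf K) X (dcAction H K (g i) X) :=
  ⟨fun c => f.1 ((c : G) * g i), by
    intro c h
    show f.1 (((c * h : K) : G) * g i) = _
    rw [dcAction_smul]
    have key : ((c * h : K) : G) * g i
        = ((c : G) * g i) * (((⟨(g i)⁻¹ * ((h : K) : G) * g i, dc_mem_H h⟩ : H) : G)) := by
      push_cast
      group
    rw [key, f.2]
    congr 1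
    ext
    push_cast
    group⟩

/-- Well-definedness: the value only depends on the double coset decomposition. -/
theorem mackeyKey (H K : Subgroup G) (X : Type) [MulAction H X] {r : ℕ} (g : Fin r → G)
    (F : ∀ i : Fin r, @Coind K _ ((K ⊓ conjSub H (g i)).subgroupOf K) X (dcAction H K (g i) X))
    (i : Fin r) {k k' h h' : G} (hk : k ∈ K) (hk' : k' ∈ K) (hh : h ∈ H) (hh' : h' ∈ H)
    (heq : k * g i * h = k' * g i * h') :
    (⟨h, hh⟩ : H)⁻¹ • (F i).1 ⟨k, hk⟩ = (⟨h', hh'⟩ : H)⁻¹ • (F i).1 ⟨k', hk'⟩ := by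
  have hu : (g i)⁻¹ * (k'⁻¹ * k) * g i = h' * h⁻¹ := by
    have h2 : (g i)⁻¹ * (k'⁻¹ * (k * g i * h)) * h⁻¹
        = (g i)⁻¹ * (k'⁻¹ * (k' * g i * h')) * h⁻¹ := by rw [heq]
    calc (g i)⁻¹ * (k'⁻¹ * k) * g i
        = (g i)⁻¹ * (k'⁻¹ * (k * g i * h)) * h⁻¹ := by group
      _ = (g i)⁻¹ * (k'⁻¹ * (k' * g i * h')) * h⁻¹ := h2
      _ = h' * h⁻¹ := by group
  have huK : k'⁻¹ * k ∈ K := mul_mem (inv_mem hk') hk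
  have huc : k'⁻¹ * k ∈ conjSub H (g i) := mem_conjSub.mpr (hu ▸ mul_mem hh' (inv_mem hh))
  set δ : (K ⊓ conjSub H (g i)).subgroupOf K :=
    ⟨⟨k'⁻¹ * k, huK⟩, Subgroup.mem_subgroupOf.mpr (Subgroup.mem_inf.mpr ⟨huK, huc⟩)⟩ with hδ
  have h3 : (⟨k, hk⟩ : K) = ⟨k', hk'⟩ * (δ : K) := by
    ext
    simp [hδ, mul_inv_cancel_left]
  have h4 := (F i).2 ⟨k', hk'⟩ δ
  rw [dcAction_smul] at h4
  have h5 : (g i)⁻¹ * (((δ⁻¹ : (K ⊓ conjSub H (g i)).subgroupOf K) : K) : G) * g i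
      = h * h'⁻¹ := by
    have hv : (((δ⁻¹ : (K ⊓ conjSub H (g i)).subgroupOf K) : K) : G) = (k'⁻¹ * k)⁻¹ := by
      simp [hδ]
    rw [hv, show (g i)⁻¹ * (k'⁻¹ * k)⁻¹ * g i = ((g i)⁻¹ * (k'⁻¹ * k) * g i)⁻¹ from by group,
      hu, mul_inv_rev, inv_inv]
  have h6 : (⟨h, hh⟩ : H)⁻¹
      * ⟨(g i)⁻¹ * (((δ⁻¹ : (K ⊓ conjSub H (g i)).subgroupOf K) : K) : G) * g i, dc_mem_H δ⁻¹⟩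
      = (⟨h', hh'⟩ : H)⁻¹ := by
    rw [show (⟨(g i)⁻¹ * (((δ⁻¹ : (K ⊓ conjSub H (g i)).subgroupOf K) : K) : G) * g i,
      dc_mem_H δ⁻¹⟩ : H) = ⟨h * h'⁻¹, mul_mem hh (inv_mem hh')⟩ from Subtype.ext h5]
    ext
    push_cast
    group
  rw [h3, h4, smul_smul, h6]

/-- Mackey double coset formula for coinduction of `G`-sets:
`Res_K^G Coind_H^G X ≅ ∏ᵢ Coind_{H_{gᵢ}}^K Res_{H_{gᵢ}}^H X`, `K`-equivariantly,
where `g₁, …, g_r` are double coset representatives for `K \ G / H` and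
`H_g = K ∩ gHg⁻¹` acts on `X` by `h • x = (g⁻¹hg) • x`. -/
theorem stmt_6 [Finite G] (H K : Subgroup G) (X : Type) [MulAction H X]
    (r : ℕ) (g : Fin r → G)
    (hg : Function.Bijective fun i : Fin r => DoubleCoset.mk K H (g i)) :
    ∃ e : Coind H X ≃
        (∀ i : Fin r, @Coind K _ ((K ⊓ conjSub H (g i)).subgroupOf K) X
          (dcAction H K (g i) X)),
      ∀ (k : K) (f : Coind H X) (i : Fin r) (c : K),
        ((e ((k : G) • f)) i).1 c = ((e f) i).1 (k⁻¹ * c) := by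
  classical
  have hdec : ∀ x : G, ∃ i : Fin r, ∃ k h : G, k ∈ K ∧ h ∈ H ∧ x = k * g i * h := by
    intro x
    obtain ⟨i, hi⟩ := hg.surjective (DoubleCoset.mk K H x)
    obtain ⟨k, hk, h, hh, hxe⟩ := (DoubleCoset.eq K H (g i) x).mp hi
    exact ⟨i, k, h, hk, hh, hxe⟩
  choose ι κ η hκ hη hx using hdec
  have hι : ∀ (x : G) (i : Fin r) (k h : G), k ∈ K → h ∈ H → x = k * g i * h → ι x = i := by
    intro x i k h hk hh hxe
    apply hg.injective
    show DoubleCoset.mk K H (g (ι x)) = DoubleCoset.mk K H (g i)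
    have e1 : DoubleCoset.mk K H (g (ι x)) = DoubleCoset.mk K H x :=
      (DoubleCoset.eq K H (g (ι x)) x).mpr ⟨κ x, hκ x, η x, hη x, hx x⟩
    have e2 : DoubleCoset.mk K H (g i) = DoubleCoset.mk K H x :=
      (DoubleCoset.eq K H (g i) x).mpr ⟨k, hk, h, hh, hxe⟩
    rw [e1, e2]
  refine ⟨Equiv.ofBijective (fun f => mackeyFwd H K X g f) ⟨?_, ?_⟩, ?_⟩
  · -- injective
    intro f f' hff
    have hff' : mackeyFwd H K X g f = mackeyFwd H K X g f' := hff
    apply Subtype.ext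
    funext x
    have e' : x = (((⟨κ x, hκ x⟩ : K) : G) * g (ι x)) * ((⟨η x, hη x⟩ : H) : G) := hx x
    rw [e', f.2, f'.2]
    have h7 : (mackeyFwd H K X g f (ι x)).1 ⟨κ x, hκ x⟩
        = (mackeyFwd H K X g f' (ι x)).1 ⟨κ x, hκ x⟩ := by rw [hff']
    exact congrArg (fun z => (⟨η x, hη x⟩ : H)⁻¹ • z) h7
  · -- surjective
    intro F
    have hprop : ∀ (x : G) (hh : H),
        (⟨η (x * ↑hh), hη _⟩ : H)⁻¹ • (F (ι (x * ↑hh))).1 ⟨κ (x * ↑hh), hκ _⟩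
          = hh⁻¹ • ((⟨η x, hη x⟩ : H)⁻¹ • (F (ι x)).1 ⟨κ x, hκ x⟩) := by
      intro x hh
      have hieq : ι (x * ↑hh) = ι x :=
        hι (x * ↑hh) (ι x) (κ x) (η x * ↑hh) (hκ x) (mul_mem (hη x) hh.2)
          (by rw [← mul_assoc, ← hx x])
      rw [hieq]
      have e1 : x * ↑hh = κ (x * ↑hh) * g (ι x) * η (x * ↑hh) := by
        rw [← hieq]; exact hx _
      have e2 : x * ↑hh = κ x * g (ι x) * (η x * ↑hh) := by rw [← mul_assoc, ← hx x]
      have hKey := mackeyKey H K X g F (ι x) (hκ _) (hκ x) (hη _) (mul_mem (hη x) hh.2)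
        (e1.symm.trans e2)
      rw [hKey]
      have e3 : (⟨η x * (hh : G), mul_mem (hη x) hh.2⟩ : H) = ⟨η x, hη x⟩ * hh := rfl
      rw [e3, mul_inv_rev, mul_smul]
    refine ⟨⟨fun x => (⟨η x, hη x⟩ : H)⁻¹ • (F (ι x)).1 ⟨κ x, hκ x⟩, hprop⟩, ?_⟩
    funext i
    apply Subtype.ext
    funext c
    show (⟨η ((c : G) * g i), hη _⟩ : H)⁻¹
        • (F (ι ((c : G) * g i))).1 ⟨κ ((c : G) * g i), hκ _⟩ = (F i).1 c
    have hieq : ι ((c : G) * g i) = i :=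
      hι ((c : G) * g i) i (c : G) 1 c.2 H.one_mem (by rw [mul_one])
    rw [hieq]
    have e1 : (c : G) * g i = κ ((c : G) * g i) * g i * η ((c : G) * g i) := by
      conv_lhs => rw [hx ((c : G) * g i)]
      rw [hieq]
    have e2 : (c : G) * g i = (c : G) * g i * 1 := (mul_one _).symm
    have hKey := mackeyKey H K X g F i (hκ _) c.2 (hη _) H.one_mem (e1.symm.trans e2)
    rw [hKey, show (⟨(1 : G), H.one_mem⟩ : H) = 1 from rfl, inv_one, one_smul]
  · -- equivariance
    intro k f i c
    show f.1 ((k : G)⁻¹ * ((c : G) * g i)) = f.1 (((k⁻¹ * c : K) : G) * g i)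
    push_cast
    group
end
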